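/- Let d ≥ 1 and let f : ℝ^d → ℝ be a function in the Zygmund class Λ_*(ℝ^d). Then the graph of f is thin for doubling measures on ℝ^{d+1}: for every doubling Borel measure μ on ℝ^{d+1}, we have μ(E) = 0, where E = {(x, f(x)) : x ∈ ℝ^d} ⊆ ℝ^{d+1} is the graph of f. -/

import Mathlib

open MeasureTheory Metric RealInnerProductSpace Filter Topology ENNReal

set_option maxHeartbeats 1000000
set_option synthInstance.maxHeartbeats 1000000

section ZygmundAux

variable {d : ℕ}

private lemma zyg_all {f : EuclideanSpace ℝ (Fin d) → ℝ} {C : ℝ} (hC : 0 ≤ C)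
    (hz : ∀ x h : EuclideanSpace ℝ (Fin d), h ≠ 0 →
      |f (x + h) + f (x - h) - 2 * f x| ≤ C * ‖h‖) :
    ∀ x h : EuclideanSpace ℝ (Fin d), |f (x + h) + f (x - h) - 2 * f x| ≤ C * ‖h‖ := by
  intro x h
  rcases eq_or_ne h 0 with rfl | hne
  · simp only [add_zero, sub_zero, norm_zero, mul_zero]
    rw [show f x + f x - 2 * f x = 0 by ring, abs_zero]
  · exact hz x h hne

/-- Secant estimate: a Zygmund function deviates from its chords by at most `C‖v‖`. -/
private lemma zyg_secant {f : EuclideanSpace ℝ (Fin d) → ℝ} (hf : Continuous f) {C : ℝ}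
    (hC : 0 ≤ C)
    (hz : ∀ x h : EuclideanSpace ℝ (Fin d), |f (x + h) + f (x - h) - 2 * f x| ≤ C * ‖h‖)
    (x v : EuclideanSpace ℝ (Fin d)) :
    ∀ s ∈ Set.Icc (0:ℝ) 1, |f (x + s • v) - f x - s * (f (x + v) - f x)| ≤ C * ‖v‖ := by
  set e : ℝ → ℝ := fun s => f (x + s • v) - f x - s * (f (x + v) - f x) with he
  have hcont : Continuous e := by
    apply Continuous.sub
    · exact (hf.comp (continuous_const.add (continuous_id.smul continuous_const))).sub
        continuous_const
    · exact continuous_id.mul continuous_const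
  have he0 : e 0 = 0 := by simp [he]
  have he1 : e 1 = 0 := by simp [he]
  have hkey : ∀ s ν : ℝ, 0 ≤ ν →
      |e (s + ν) + e (s - ν) - 2 * e s| ≤ C * ν * ‖v‖ := by
    intro s ν hν
    have hrw : e (s + ν) + e (s - ν) - 2 * e s
        = f ((x + s • v) + ν • v) + f ((x + s • v) - ν • v) - 2 * f (x + s • v) := by
      have h1 : x + (s + ν) • v = (x + s • v) + ν • v := by module
      have h2 : x + (s - ν) • v = (x + s • v) - ν • v := by module
      rw [he]; simp only []; rw [h1, h2]; ring
    rw [hrw]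
    calc _ ≤ C * ‖ν • v‖ := hz _ _
    _ = C * ν * ‖v‖ := by rw [norm_smul, Real.norm_eq_abs, abs_of_nonneg hν]; ring
  have hCv : 0 ≤ C * ‖v‖ := mul_nonneg hC (norm_nonneg v)
  obtain ⟨s₀, hs₀mem, hs₀⟩ :=
    isCompact_Icc.exists_isMaxOn (Set.nonempty_Icc.2 zero_le_one)
      ((hcont.abs).continuousOn (s := Set.Icc (0:ℝ) 1))
  have hmax : ∀ s ∈ Set.Icc (0:ℝ) 1, |e s| ≤ |e s₀| := hs₀
  have hbound : |e s₀| ≤ C * ‖v‖ := by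
    rcases eq_or_ne s₀ 0 with rfl | h0
    · simpa [he0] using hCv
    rcases eq_or_ne s₀ 1 with rfl | h1
    · simpa [he1] using hCv
    · obtain ⟨hs₀0, hs₀1⟩ := hs₀mem
      have hlt0 : 0 < s₀ := lt_of_le_of_ne hs₀0 (Ne.symm h0)
      have hlt1 : s₀ < 1 := lt_of_le_of_ne hs₀1 h1
      set ν := min s₀ (1 - s₀) with hν
      have hν0 : 0 < ν := lt_min hlt0 (by linarith)
      have hν1 : ν ≤ 1 := le_trans (min_le_left _ _) hs₀1
      have hkey' := hkey s₀ ν hν0.le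
      have hmem1 : s₀ + ν ∈ Set.Icc (0:ℝ) 1 := by
        constructor
        · linarith
        · have : ν ≤ 1 - s₀ := min_le_right _ _
          linarith
      have hmem2 : s₀ - ν ∈ Set.Icc (0:ℝ) 1 := by
        constructor
        · have : ν ≤ s₀ := min_le_left _ _
          linarith
        · linarith
      have hend : e (s₀ + ν) = 0 ∨ e (s₀ - ν) = 0 := by
        rcases min_cases s₀ (1 - s₀) with ⟨hmin, _⟩ | ⟨hmin, _⟩
        · right; rw [hν, hmin]; simpa using he0
        · left; rw [hν, hmin]; simpa using he1
      have h2 : 2 * |e s₀| ≤ |e (s₀ + ν)| + |e (s₀ - ν)| + C * ν * ‖v‖ := by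
        have hk := abs_le.1 hkey'
        have hA1 := le_abs_self (e (s₀ + ν))
        have hA2 := neg_abs_le (e (s₀ + ν))
        have hB1 := le_abs_self (e (s₀ - ν))
        have hB2 := neg_abs_le (e (s₀ - ν))
        rcases abs_cases (e s₀) with ⟨heq, _⟩ | ⟨heq, _⟩ <;> rw [heq] <;> linarith [hk.1, hk.2]
      have hle : |e (s₀ + ν)| + |e (s₀ - ν)| ≤ |e s₀| := by
        rcases hend with h | h
        · rw [h]; simpa using hmax _ hmem2
        · rw [h]; simpa using hmax _ hmem1
      have : |e s₀| ≤ C * ν * ‖v‖ := by linarith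
      calc |e s₀| ≤ C * ν * ‖v‖ := this
        _ ≤ C * 1 * ‖v‖ := by
            apply mul_le_mul_of_nonneg_right _ (norm_nonneg v)
            exact mul_le_mul_of_nonneg_left hν1 hC
        _ = C * ‖v‖ := by ring
  intro s hs
  exact le_trans (hmax s hs) hbound

private lemma zyg_mixed {f : EuclideanSpace ℝ (Fin d) → ℝ} {C : ℝ} (hC : 0 ≤ C)
    (hz : ∀ x h : EuclideanSpace ℝ (Fin d), |f (x + h) + f (x - h) - 2 * f x| ≤ C * ‖h‖)
    (x u v : EuclideanSpace ℝ (Fin d)) :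
    |f (x + (u + v)) + f x - f (x + u) - f (x + v)| ≤ C * (‖u‖ + ‖v‖) := by
  set m := x + (2⁻¹ : ℝ) • (u + v) with hm
  have h1 : x + (u + v) = m + (2⁻¹ : ℝ) • (u + v) := by rw [hm]; module
  have h2 : x = m - (2⁻¹ : ℝ) • (u + v) := by rw [hm]; module
  have h3 : x + u = m + (2⁻¹ : ℝ) • (u - v) := by rw [hm]; module
  have h4 : x + v = m - (2⁻¹ : ℝ) • (u - v) := by rw [hm]; module
  have e1 := hz m ((2⁻¹ : ℝ) • (u + v))
  have e2 := hz m ((2⁻¹ : ℝ) • (u - v))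
  have hn1 : ‖(2⁻¹ : ℝ) • (u + v)‖ ≤ (‖u‖ + ‖v‖) / 2 := by
    rw [norm_smul]
    simp only [norm_inv, Real.norm_ofNat]
    calc 2⁻¹ * ‖u + v‖ ≤ 2⁻¹ * (‖u‖ + ‖v‖) := by
          apply mul_le_mul_of_nonneg_left (norm_add_le u v) (by norm_num)
      _ = (‖u‖ + ‖v‖) / 2 := by ring
  have hn2 : ‖(2⁻¹ : ℝ) • (u - v)‖ ≤ (‖u‖ + ‖v‖) / 2 := by
    rw [norm_smul]
    simp only [norm_inv, Real.norm_ofNat]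
    calc 2⁻¹ * ‖u - v‖ ≤ 2⁻¹ * (‖u‖ + ‖v‖) := by
          apply mul_le_mul_of_nonneg_left (norm_sub_le u v) (by norm_num)
      _ = (‖u‖ + ‖v‖) / 2 := by ring
  calc |f (x + (u + v)) + f x - f (x + u) - f (x + v)|
      = |(f (m + (2⁻¹ : ℝ) • (u + v)) + f (m - (2⁻¹ : ℝ) • (u + v)) - 2 * f m)
        - (f (m + (2⁻¹ : ℝ) • (u - v)) + f (m - (2⁻¹ : ℝ) • (u - v)) - 2 * f m)| := by
        rw [h1, h3, h4, h2]; congr 1; ring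
    _ ≤ |f (m + (2⁻¹ : ℝ) • (u + v)) + f (m - (2⁻¹ : ℝ) • (u + v)) - 2 * f m|
        + |f (m + (2⁻¹ : ℝ) • (u - v)) + f (m - (2⁻¹ : ℝ) • (u - v)) - 2 * f m| := abs_sub _ _
    _ ≤ C * ‖(2⁻¹ : ℝ) • (u + v)‖ + C * ‖(2⁻¹ : ℝ) • (u - v)‖ := add_le_add e1 e2
    _ ≤ C * ((‖u‖ + ‖v‖) / 2) + C * ((‖u‖ + ‖v‖) / 2) := by
        exact add_le_add (mul_le_mul_of_nonneg_left hn1 hC) (mul_le_mul_of_nonneg_left hn2 hC)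
    _ = C * (‖u‖ + ‖v‖) := by ring

private lemma zyg_affine {f : EuclideanSpace ℝ (Fin d) → ℝ} (hf : Continuous f) {C : ℝ}
    (hC : 0 ≤ C)
    (hz : ∀ x h : EuclideanSpace ℝ (Fin d), |f (x + h) + f (x - h) - 2 * f x| ≤ C * ‖h‖)
    (x : EuclideanSpace ℝ (Fin d)) {t : ℝ} (ht : 0 < t) :
    ∃ g : EuclideanSpace ℝ (Fin d), ∀ h : EuclideanSpace ℝ (Fin d), ‖h‖ ≤ t →
      |f (x + h) - f x - ⟪h, g⟫| ≤ (d : ℝ) * ((d : ℝ) + 3) * C * t := by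
  classical
  set sing : Fin d → EuclideanSpace ℝ (Fin d) := fun i => EuclideanSpace.single i (1:ℝ) with hsing
  obtain ⟨g', hg'⟩ : ∃ g' : Fin d → ℝ, ∀ i, g' i = (f (x + t • sing i) - f x) / t :=
    ⟨_, fun _ => rfl⟩
  refine ⟨(WithLp.equiv 2 (Fin d → ℝ)).symm g', ?_⟩
  intro h hht
  have hcoord : ∀ i, |h i| ≤ t := by
    intro i
    have h2 := abs_real_inner_le_norm (sing i) h
    rw [hsing] at h2
    rw [EuclideanSpace.inner_single_left, EuclideanSpace.norm_single] at h2
    simp only [map_one, one_mul, norm_one, one_mul] at h2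
    calc |h i| ≤ ‖h‖ := by simpa using h2
      _ ≤ t := hht
  have hsingnorm : ∀ i, ‖sing i‖ = 1 := by
    intro i; rw [hsing]; simp [EuclideanSpace.norm_single]
  have husmul : ∀ i, ‖h i • sing i‖ = |h i| := by
    intro i; rw [norm_smul, hsingnorm, Real.norm_eq_abs, mul_one]
  -- chain estimate
  have hchain : ∀ s : Finset (Fin d),
      |f (x + ∑ i ∈ s, h i • sing i) - f x - ∑ i ∈ s, (f (x + h i • sing i) - f x)|
        ≤ (s.card : ℝ) * (C * (((d : ℝ) + 1) * t)) := by
    intro s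
    induction s using Finset.induction_on with
    | empty => simp
    | insert j s hj ih =>
      rw [Finset.sum_insert hj, Finset.sum_insert hj, Finset.card_insert_of_notMem hj]
      set u := h j • sing j
      set L := ∑ i ∈ s, h i • sing i with hL
      have hnormL : ‖L‖ ≤ (d : ℝ) * t := by
        calc ‖L‖ ≤ ∑ i ∈ s, ‖h i • sing i‖ := norm_sum_le _ _
          _ ≤ ∑ _i ∈ s, t := by
              apply Finset.sum_le_sum
              intro i _
              rw [husmul]; exact hcoord i
          _ = (s.card : ℝ) * t := by rw [Finset.sum_const]; push_cast; ring
          _ ≤ (d : ℝ) * t := by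
              apply mul_le_mul_of_nonneg_right _ ht.le
              exact_mod_cast Finset.card_le_card (Finset.subset_univ s) |>.trans
                (by simp [Finset.card_univ])
      have hnormu : ‖u‖ ≤ t := by rw [husmul]; exact hcoord j
      have hmix := zyg_mixed hC hz x u L
      have htri : f (x + (u + L)) - f x - ((f (x + u) - f x) + ∑ i ∈ s, (f (x + h i • sing i) - f x))
          = (f (x + (u + L)) + f x - f (x + u) - f (x + L))
            + (f (x + L) - f x - ∑ i ∈ s, (f (x + h i • sing i) - f x)) := by ring
      calc |f (x + (u + L)) - f x - ((f (x + u) - f x) + ∑ i ∈ s, (f (x + h i • sing i) - f x))|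
          ≤ |f (x + (u + L)) + f x - f (x + u) - f (x + L)|
            + |f (x + L) - f x - ∑ i ∈ s, (f (x + h i • sing i) - f x)| := by
            rw [htri]; exact abs_add_le _ _
        _ ≤ C * (‖u‖ + ‖L‖) + (s.card : ℝ) * (C * (((d : ℝ) + 1) * t)) := add_le_add hmix ih
        _ ≤ C * (t + (d : ℝ) * t) + (s.card : ℝ) * (C * (((d : ℝ) + 1) * t)) := by
            apply add_le_add_left
            apply mul_le_mul_of_nonneg_left _ hC
            exact add_le_add hnormu hnormL
        _ = ((s.card : ℝ) + 1) * (C * (((d : ℝ) + 1) * t)) := by ring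
        _ = ((s.card + 1 : ℕ) : ℝ) * (C * (((d : ℝ) + 1) * t)) := by push_cast; ring
  -- coordinate secant estimate
  have hcoordsec : ∀ i, |(f (x + h i • sing i) - f x) - h i * g' i| ≤ 2 * (C * t) := by
    intro i
    set v := t • sing i with hv
    have hnormv : ‖v‖ = t := by rw [hv, norm_smul, hsingnorm, Real.norm_eq_abs, abs_of_pos ht, mul_one]
    have hgi : g' i = (f (x + v) - f x) / t := hg' i
    rcases le_or_gt 0 (h i) with hpos | hneg
    · have hs : h i / t ∈ Set.Icc (0:ℝ) 1 := by
        constructor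
        · exact div_nonneg hpos ht.le
        · rw [div_le_one ht]
          exact (le_abs_self _).trans (hcoord i)
      have hsec := zyg_secant hf hC hz x v (h i / t) hs
      have hsmul : (h i / t) • v = h i • sing i := by
        rw [hv, smul_smul, div_mul_cancel₀ _ ht.ne']
      rw [hsmul] at hsec
      have : (h i / t) * (f (x + v) - f x) = h i * g' i := by
        rw [hgi]; field_simp
      rw [this] at hsec
      calc |(f (x + h i • sing i) - f x) - h i * g' i| ≤ C * ‖v‖ := hsec
        _ = C * t := by rw [hnormv]
        _ ≤ 2 * (C * t) := by nlinarith [mul_nonneg hC ht.le]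
    · have hs : (-(h i)) / t ∈ Set.Icc (0:ℝ) 1 := by
        constructor
        · exact div_nonneg (by linarith) ht.le
        · rw [div_le_one ht]
          calc -(h i) ≤ |h i| := by rw [abs_of_neg hneg]
            _ ≤ t := hcoord i
      have hsec := zyg_secant hf hC hz x (-v) ((-(h i)) / t) hs
      have hsmul : ((-(h i)) / t) • (-v) = h i • sing i := by
        rw [hv, smul_neg, smul_smul, div_mul_cancel₀ _ ht.ne']
        rw [← neg_smul, neg_neg]
      rw [hsmul] at hsec
      have hzyg := hz x v
      have hxsub : x - v = x + (-v) := by rw [sub_eq_add_neg]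
      rw [hxsub] at hzyg
      have hsle : (-(h i)) / t ≤ 1 := hs.2
      have hsnn : 0 ≤ (-(h i)) / t := hs.1
      have hdecomp : (f (x + h i • sing i) - f x) - h i * g' i
          = (f (x + h i • sing i) - f x - ((-(h i)) / t) * (f (x + (-v)) - f x))
            + ((-(h i)) / t) * ((f (x + v) + f (x + (-v)) - 2 * f x)) := by
        rw [hgi]; field_simp; ring
      rw [hdecomp]
      calc _ ≤ |f (x + h i • sing i) - f x - ((-(h i)) / t) * (f (x + (-v)) - f x)|
            + |((-(h i)) / t) * ((f (x + v) + f (x + (-v)) - 2 * f x))| := abs_add_le _ _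
        _ ≤ C * ‖-v‖ + ((-(h i)) / t) * |f (x + v) + f (x + (-v)) - 2 * f x| := by
            apply add_le_add hsec
            rw [abs_mul, abs_of_nonneg hsnn]
        _ ≤ C * t + 1 * (C * t) := by
            apply add_le_add
            · rw [norm_neg, hnormv]
            · have h1 : |f (x + v) + f (x + (-v)) - 2 * f x| ≤ C * t := by
                calc |f (x + v) + f (x + (-v)) - 2 * f x| ≤ C * ‖v‖ := by
                      rw [abs_sub_comm] at hzyg ⊢
                      · convert hzyg using 3 <;> ring_nf
                  _ = C * t := by rw [hnormv]
              calc ((-(h i)) / t) * |f (x + v) + f (x + (-v)) - 2 * f x|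
                  ≤ 1 * |f (x + v) + f (x + (-v)) - 2 * f x| :=
                    mul_le_mul_of_nonneg_right hsle (abs_nonneg _)
                _ ≤ 1 * (C * t) := by rw [one_mul, one_mul]; exact h1
        _ = 2 * (C * t) := by ring
  -- assemble
  have hdecomp : h = ∑ i, h i • sing i := by
    have hb := (EuclideanSpace.basisFun (Fin d) ℝ).sum_repr h
    simp only [EuclideanSpace.basisFun_repr, EuclideanSpace.basisFun_apply] at hb
    rw [hsing]; exact hb.symm
  have hinner : ⟪h, (WithLp.equiv 2 (Fin d → ℝ)).symm g'⟫ = ∑ i, h i * g' i := by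
    rw [PiLp.inner_apply]
    refine Finset.sum_congr rfl (fun i _ => ?_)
    simp [mul_comm]
  have hfinal : f (x + h) - f x - ⟪h, (WithLp.equiv 2 (Fin d → ℝ)).symm g'⟫
      = (f (x + ∑ i, h i • sing i) - f x - ∑ i, (f (x + h i • sing i) - f x))
        + ∑ i, ((f (x + h i • sing i) - f x) - h i * g' i) := by
    rw [hinner]
    simp only [Finset.sum_sub_distrib]
    rw [← hdecomp]
    ring
  rw [hfinal]
  calc _ ≤ |f (x + ∑ i, h i • sing i) - f x - ∑ i, (f (x + h i • sing i) - f x)|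
        + |∑ i, ((f (x + h i • sing i) - f x) - h i * g' i)| := abs_add_le _ _
    _ ≤ (d : ℝ) * (C * (((d : ℝ) + 1) * t)) + (d : ℝ) * (2 * (C * t)) := by
        apply add_le_add
        · have := hchain Finset.univ
          simpa [Finset.card_univ] using this
        · calc |∑ i, ((f (x + h i • sing i) - f x) - h i * g' i)|
              ≤ ∑ i, |(f (x + h i • sing i) - f x) - h i * g' i| := Finset.abs_sum_le_sum_abs _ _
            _ ≤ ∑ _i : Fin d, 2 * (C * t) := Finset.sum_le_sum (fun i _ => hcoordsec i)
            _ = (d : ℝ) * (2 * (C * t)) := by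
                rw [Finset.sum_const, Finset.card_univ, Fintype.card_fin, nsmul_eq_mul]
    _ = (d : ℝ) * ((d : ℝ) + 3) * C * t := by ring

-- component distance bounds
private lemma dist_fst_le' (p q : WithLp 2 (EuclideanSpace ℝ (Fin d) × ℝ)) :
    dist p.fst q.fst ≤ dist p q := by
  rw [WithLp.prod_dist_eq_of_L2]
  exact Real.le_sqrt_of_sq_le (by nlinarith [sq_nonneg (dist p.snd q.snd)])

private lemma dist_snd_le' (p q : WithLp 2 (EuclideanSpace ℝ (Fin d) × ℝ)) :
    dist p.snd q.snd ≤ dist p q := by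
  rw [WithLp.prod_dist_eq_of_L2]
  exact Real.le_sqrt_of_sq_le (by nlinarith [sq_nonneg (dist p.fst q.fst)])

private lemma zyg_porosity {f : EuclideanSpace ℝ (Fin d) → ℝ} (hf : Continuous f) {C : ℝ}
    (hC : 0 ≤ C)
    (hz : ∀ x h : EuclideanSpace ℝ (Fin d), |f (x + h) + f (x - h) - 2 * f x| ≤ C * ‖h‖) :
    ∃ ε : ℝ, 0 < ε ∧ ε ≤ 1 ∧ ∀ (x₀ : EuclideanSpace ℝ (Fin d)) (R : ℝ), 0 < R →
      ∃ w : WithLp 2 (EuclideanSpace ℝ (Fin d) × ℝ),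
        closedBall w (ε * R) ⊆
          closedBall ((WithLp.equiv 2 (EuclideanSpace ℝ (Fin d) × ℝ)).symm (x₀, f x₀)) R ∧
        ∀ p ∈ closedBall w (ε * R), p.snd ≠ f p.fst := by
  classical
  set κ : ℝ := (d : ℝ) * ((d : ℝ) + 3) * C + 1 with hκdef
  have hκ1 : 1 ≤ κ := by
    rw [hκdef]
    nlinarith [mul_nonneg (mul_nonneg (Nat.cast_nonneg (α := ℝ) d)
      (by positivity : (0:ℝ) ≤ (d:ℝ) + 3)) hC]
  have hκ0 : 0 < κ := lt_of_lt_of_le one_pos hκ1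
  set D : ℝ := 3 * κ + 5 with hDdef
  have hD0 : 0 < D := by positivity
  refine ⟨1 / (6 * D), by positivity, ?_, ?_⟩
  · rw [div_le_one (by positivity)]
    nlinarith
  intro x₀ R hR
  set ε : ℝ := 1 / (6 * D) with hεdef
  have hε0 : 0 < ε := by positivity
  set t : ℝ := R / D with htdef
  have ht0 : 0 < t := by positivity
  set z : WithLp 2 (EuclideanSpace ℝ (Fin d) × ℝ) :=
    (WithLp.equiv 2 (EuclideanSpace ℝ (Fin d) × ℝ)).symm (x₀, f x₀) with hzdef
  have hzfst : z.fst = x₀ := rfl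
  have hzsnd : z.snd = f x₀ := rfl
  obtain ⟨g, hg⟩ := zyg_affine hf hC hz x₀ ht0
  have hgslab : ∀ h : EuclideanSpace ℝ (Fin d), ‖h‖ ≤ t →
      |f (x₀ + h) - f x₀ - ⟪h, g⟫| ≤ κ * t := by
    intro h hh
    calc |f (x₀ + h) - f x₀ - ⟪h, g⟫| ≤ (d : ℝ) * ((d : ℝ) + 3) * C * t := hg h hh
      _ ≤ κ * t := by
          apply mul_le_mul_of_nonneg_right _ ht0.le
          rw [hκdef]; linarith
  set N : ℝ := Real.sqrt (‖g‖ ^ 2 + 1) with hNdef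
  have hN1 : 1 ≤ N := by
    rw [hNdef]
    exact Real.le_sqrt_of_sq_le (by nlinarith [sq_nonneg ‖g‖])
  have hN0 : 0 < N := lt_of_lt_of_le one_pos hN1
  have hgN : ‖g‖ ≤ N := by
    rw [hNdef]
    exact Real.le_sqrt_of_sq_le (by nlinarith)
  have hNsq : N ^ 2 = ‖g‖ ^ 2 + 1 := Real.sq_sqrt (by positivity)
  -- the affine slab bound on values
  have hosc : ∀ h : EuclideanSpace ℝ (Fin d), ‖h‖ ≤ t →
      |f (x₀ + h) - f x₀| ≤ (N + κ) * t := by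
    intro h hh
    have h1 := hgslab h hh
    have h2 : |⟪h, g⟫| ≤ N * t := by
      calc |⟪h, g⟫| ≤ ‖h‖ * ‖g‖ := abs_real_inner_le_norm h g
        _ ≤ t * N := by
            apply mul_le_mul hh hgN (norm_nonneg g) ht0.le
        _ = N * t := by ring
    calc |f (x₀ + h) - f x₀| = |(f (x₀ + h) - f x₀ - ⟪h, g⟫) + ⟪h, g⟫| := by ring_nf
      _ ≤ |f (x₀ + h) - f x₀ - ⟪h, g⟫| + |⟪h, g⟫| := abs_add_le _ _
      _ ≤ κ * t + N * t := add_le_add h1 h2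
      _ = (N + κ) * t := by ring
  by_cases hsteep : N ≤ 2 * κ + 2
  · -- flat case: hole above the graph
    set w : WithLp 2 (EuclideanSpace ℝ (Fin d) × ℝ) :=
      (WithLp.equiv 2 (EuclideanSpace ℝ (Fin d) × ℝ)).symm (x₀, f x₀ + (N + κ + 2) * t) with hwdef
    have hwfst : w.fst = x₀ := rfl
    have hwsnd : w.snd = f x₀ + (N + κ + 2) * t := rfl
    have hdistwz : dist w z = (N + κ + 2) * t := by
      rw [WithLp.prod_dist_eq_of_L2, hwfst, hzfst, hwsnd, hzsnd]
      rw [dist_self]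
      rw [Real.dist_eq]
      have : |f x₀ + (N + κ + 2) * t - f x₀| = (N + κ + 2) * t := by
        rw [show f x₀ + (N + κ + 2) * t - f x₀ = (N + κ + 2) * t by ring]
        exact abs_of_pos (by positivity)
      rw [this]
      rw [show (0:ℝ) ^ 2 + ((N + κ + 2) * t) ^ 2 = ((N + κ + 2) * t) ^ 2 by ring]
      exact Real.sqrt_sq (by positivity)
    refine ⟨w, ?_, ?_⟩
    · intro p hp
      rw [mem_closedBall] at hp ⊢
      have hεt : ε * R ≤ t := by
        rw [hεdef, htdef]
        rw [div_mul_eq_mul_div, div_le_div_iff₀ (by positivity) hD0]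
        nlinarith
      calc dist p z ≤ dist p w + dist w z := dist_triangle _ _ _
        _ ≤ t + (N + κ + 2) * t := by
            rw [hdistwz]; exact add_le_add_left (hp.trans hεt) _
        _ ≤ t + (2 * κ + 2 + κ + 2) * t := by
            apply add_le_add_right
            apply mul_le_mul_of_nonneg_right _ ht0.le
            linarith
        _ = (3 * κ + 5) * t := by ring
        _ = R := by rw [htdef]; field_simp; rw [hDdef]
    · intro p hp hgraph
      rw [mem_closedBall] at hp
      have hεt : ε * R ≤ t := by
        rw [hεdef, htdef]
        rw [div_mul_eq_mul_div, div_le_div_iff₀ (by positivity) hD0]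
        nlinarith
      have hpw : dist p w ≤ t := hp.trans hεt
      have hfst : dist p.fst x₀ ≤ t := by
        have := dist_fst_le' p w
        rw [hwfst] at this
        exact this.trans hpw |>.trans (le_refl t) |>.trans_eq rfl
      have hsnd : |p.snd - w.snd| ≤ t := by
        have := dist_snd_le' p w
        rw [Real.dist_eq] at this
        exact this.trans hpw
      -- value bound at p.fst
      have hval : |f p.fst - f x₀| ≤ (N + κ) * t := by
        have h1 : p.fst = x₀ + (p.fst - x₀) := by abel
        have h2 : ‖p.fst - x₀‖ ≤ t := by
          rw [← dist_eq_norm]; exact hfst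
        have := hosc (p.fst - x₀) h2
        rw [← h1] at this
        exact this
      have hlow : p.snd ≥ f x₀ + (N + κ + 1) * t := by
        have := abs_le.1 hsnd
        rw [hwsnd] at this
        linarith [this.1]
      have hhigh : f p.fst ≤ f x₀ + (N + κ) * t := by
        linarith [(abs_le.1 hval).1, (abs_le.1 hval).2]
      rw [hgraph] at hlow
      linarith
  · -- steep case: hole in the normal direction
    push_neg at hsteep
    set nv : WithLp 2 (EuclideanSpace ℝ (Fin d) × ℝ) :=
      (WithLp.equiv 2 (EuclideanSpace ℝ (Fin d) × ℝ)).symm (-g, 1) with hnvdef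
    have hnvfst : nv.fst = -g := rfl
    have hnvsnd : nv.snd = (1:ℝ) := rfl
    have hnv_inner : ⟪nv, nv⟫ = N ^ 2 := by
      rw [WithLp.prod_inner_apply]
      change ⟪nv.fst, nv.fst⟫ + ⟪nv.snd, nv.snd⟫ = N ^ 2
      rw [hnvfst, hnvsnd, inner_neg_neg, real_inner_self_eq_norm_sq,
        hNsq]
      norm_num
    have hnv_norm : ‖nv‖ = N := by
      rw [@norm_eq_sqrt_real_inner, hnv_inner]
      exact Real.sqrt_sq hN0.le
    set ρ : ℝ := t / 6 with hρdef
    have hρ0 : 0 < ρ := by positivity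
    set a : ℝ := κ * t / N + 2 * ρ with hadef
    have ha0 : 0 < a := by positivity
    set w : WithLp 2 (EuclideanSpace ℝ (Fin d) × ℝ) := z + a • (N⁻¹ • nv) with hwdef
    -- φ difference formula
    have hφ : ∀ p q : WithLp 2 (EuclideanSpace ℝ (Fin d) × ℝ),
        (p.snd - ⟪p.fst - x₀, g⟫) - (q.snd - ⟪q.fst - x₀, g⟫) = ⟪p - q, nv⟫ := by
      intro p q
      rw [WithLp.prod_inner_apply]
      change _ = ⟪(p - q).fst, nv.fst⟫ + ⟪(p - q).snd, nv.snd⟫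
      have h1 : (p - q).fst = p.fst - q.fst := rfl
      have h2 : (p - q).snd = p.snd - q.snd := rfl
      rw [h1, h2, hnvfst, hnvsnd]
      simp only [RCLike.inner_apply, conj_trivial, mul_one, inner_neg_right, inner_sub_left]
      ring
    have hwz : w - z = a • (N⁻¹ • nv) := by rw [hwdef]; abel
    have hdistwz : dist w z = a := by
      rw [dist_eq_norm, hwz, norm_smul, norm_smul, hnv_norm, Real.norm_eq_abs,
        Real.norm_eq_abs, abs_of_pos ha0, abs_of_pos (inv_pos.2 hN0)]
      field_simp
    have hφwz : ⟪w - z, nv⟫ = a * N := by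
      rw [hwz, real_inner_smul_left, real_inner_smul_left, hnv_inner]
      field_simp
      try ring
    refine ⟨w, ?_, ?_⟩
    · intro p hp
      rw [mem_closedBall] at hp ⊢
      have hεt : ε * R ≤ ρ := by
        apply le_of_eq
        rw [hεdef, hρdef, htdef]
        field_simp
        try ring
        try tauto
      have haρ : a + ρ ≤ t := by
        rw [hadef, hρdef]
        have h1 : κ * t / N ≤ t / 2 := by
          rw [div_le_div_iff₀ hN0 (by norm_num : (0:ℝ) < 2)]
          nlinarith
        linarith
      have htR : t ≤ R := by
        rw [htdef, div_le_iff₀ hD0]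
        nlinarith
      calc dist p z ≤ dist p w + dist w z := dist_triangle _ _ _
        _ ≤ ρ + a := add_le_add (hp.trans hεt) hdistwz.le
        _ ≤ t := by linarith
        _ ≤ R := htR
    · intro p hp hgraph
      rw [mem_closedBall] at hp
      have hεt : ε * R ≤ ρ := by
        apply le_of_eq
        rw [hεdef, hρdef, htdef]
        field_simp
        try ring
        try tauto
      have hpw : dist p w ≤ ρ := hp.trans hεt
      -- p is in the ball B(z,t), so the slab bound applies
      have haρ : a + ρ ≤ t := by
        rw [hadef, hρdef]
        have h1 : κ * t / N ≤ t / 2 := by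
          rw [div_le_div_iff₀ hN0 (by norm_num : (0:ℝ) < 2)]
          nlinarith
        linarith
      have hpz : dist p z ≤ t := by
        calc dist p z ≤ dist p w + dist w z := dist_triangle _ _ _
          _ ≤ ρ + a := add_le_add hpw hdistwz.le
          _ ≤ t := by linarith
      have hfst : ‖p.fst - x₀‖ ≤ t := by
        rw [← dist_eq_norm]
        have := dist_fst_le' p z
        rw [hzfst] at this
        exact this.trans hpz
      -- slab bound: φ(p) close to f x₀
      have hslab : |(p.snd - ⟪p.fst - x₀, g⟫) - f x₀| ≤ κ * t := by
        have h1 : p.fst = x₀ + (p.fst - x₀) := by abel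
        have h2 := hgslab (p.fst - x₀) hfst
        rw [← h1] at h2
        rw [hgraph]
        convert h2 using 2
        ring
      -- but φ(p) is large
      have hφp : (p.snd - ⟪p.fst - x₀, g⟫) - f x₀ = ⟪p - z, nv⟫ := by
        have := hφ p z
        rw [hzfst, hzsnd] at this
        simpa using this
      have hφlarge : ⟪p - z, nv⟫ > κ * t := by
        have hsplit : ⟪p - z, nv⟫ = ⟪p - w, nv⟫ + ⟪w - z, nv⟫ := by
          rw [← inner_add_left]
          congr 1
          abel
        have hbound : |⟪p - w, nv⟫| ≤ ρ * N := by
          calc |⟪p - w, nv⟫| ≤ ‖p - w‖ * ‖nv‖ := abs_real_inner_le_norm _ _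
            _ ≤ ρ * N := by
                rw [hnv_norm]
                apply mul_le_mul_of_nonneg_right _ hN0.le
                rw [← dist_eq_norm]; exact hpw
        have hwzval : ⟪w - z, nv⟫ = κ * t + 2 * ρ * N := by
          rw [hφwz, hadef]
          field_simp
          try ring
        have h1 : ⟪p - w, nv⟫ ≥ -(ρ * N) := by linarith [(abs_le.1 hbound).1]
        have hρN : 0 < ρ * N := by positivity
        rw [hsplit, hwzval]
        linarith
      rw [hφp] at hslab
      have := (abs_le.1 hslab).2
      linarith

end ZygmundAux

/-- **Zygmund graphs are thin for doubling measures.**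
If `f : ℝ^d → ℝ` (d ≥ 1) is bounded, continuous, and in the Zygmund class
(its second divided differences are uniformly bounded), then for every doubling
Borel measure `μ` on `ℝ^{d+1}` (identified with `ℝ^d × ℝ` carrying the Euclidean
metric, i.e. the `L²` product), the graph of `f` is `μ`-null. -/
theorem zygmund_graph_thin_for_doubling_measures
    (d : ℕ) (hd : 1 ≤ d)
    (f : EuclideanSpace ℝ (Fin d) → ℝ)
    (hf_bdd : ∃ B : ℝ, ∀ x, |f x| ≤ B)
    (hf_cont : Continuous f)
    (hf_zyg : ∃ C : ℝ, ∀ x h : EuclideanSpace ℝ (Fin d), h ≠ 0 →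
      |f (x + h) + f (x - h) - 2 * f x| ≤ C * ‖h‖)
    [MeasurableSpace (WithLp 2 (EuclideanSpace ℝ (Fin d) × ℝ))]
    [BorelSpace (WithLp 2 (EuclideanSpace ℝ (Fin d) × ℝ))]
    (μ : Measure (WithLp 2 (EuclideanSpace ℝ (Fin d) × ℝ)))
    (hμ_pos : ∀ (z : WithLp 2 (EuclideanSpace ℝ (Fin d) × ℝ)) (r : ℝ), 0 < r →
      0 < μ (closedBall z r))
    (hμ_fin : ∀ (z : WithLp 2 (EuclideanSpace ℝ (Fin d) × ℝ)) (r : ℝ),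
      μ (closedBall z r) < ⊤)
    (hμ_doub : ∃ C : ℝ, 0 < C ∧ ∀ (z : WithLp 2 (EuclideanSpace ℝ (Fin d) × ℝ)) (r : ℝ),
      μ (closedBall z r) ≤ ENNReal.ofReal C * μ (closedBall z (r / 2))) :
    μ {z : WithLp 2 (EuclideanSpace ℝ (Fin d) × ℝ) |
        ∃ x : EuclideanSpace ℝ (Fin d), z = (WithLp.equiv 2 _).symm (x, f x)} = 0 := by
  classical
  obtain ⟨C₀, hzyg₀⟩ := hf_zyg
  set C : ℝ := max C₀ 0 with hCdef
  have hC : 0 ≤ C := le_max_right _ _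
  have hz : ∀ x h : EuclideanSpace ℝ (Fin d),
      |f (x + h) + f (x - h) - 2 * f x| ≤ C * ‖h‖ := by
    intro x h
    rcases eq_or_ne h 0 with rfl | hne
    · simp only [add_zero, sub_zero, norm_zero, mul_zero]
      rw [show f x + f x - 2 * f x = 0 by ring, abs_zero]
    · exact (hzyg₀ x h hne).trans
        (mul_le_mul_of_nonneg_right (le_max_left _ _) (norm_nonneg _))
  obtain ⟨ε, hε0, hε1, hporo⟩ := zyg_porosity hf_cont hC hz
  obtain ⟨CD, hCD0, hdoub⟩ := hμ_doub
  set S : Set (WithLp 2 (EuclideanSpace ℝ (Fin d) × ℝ)) :=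
    {z | ∃ x : EuclideanSpace ℝ (Fin d), z = (WithLp.equiv 2 _).symm (x, f x)} with hSdef
  show μ S = 0
  have hSmem : ∀ p : WithLp 2 (EuclideanSpace ℝ (Fin d) × ℝ), p ∈ S ↔ p.snd = f p.fst := by
    intro p
    constructor
    · rintro ⟨x, rfl⟩; rfl
    · intro h
      refine ⟨p.fst, ?_⟩
      rw [← h]
      rfl
  have hfstcont : Continuous fun p : WithLp 2 (EuclideanSpace ℝ (Fin d) × ℝ) => p.fst := by
    have h := (WithLp.prodContinuousLinearEquiv 2 ℝ (EuclideanSpace ℝ (Fin d)) ℝ).continuous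
    exact (continuous_fst.comp h : _)
  have hsndcont : Continuous fun p : WithLp 2 (EuclideanSpace ℝ (Fin d) × ℝ) => p.snd := by
    have h := (WithLp.prodContinuousLinearEquiv 2 ℝ (EuclideanSpace ℝ (Fin d)) ℝ).continuous
    exact (continuous_snd.comp h : _)
  have hSclosed : IsClosed S := by
    have h1 : S = (fun p : WithLp 2 (EuclideanSpace ℝ (Fin d) × ℝ) =>
        p.snd - f p.fst) ⁻¹' {0} := by
      ext p
      simp only [Set.mem_preimage, Set.mem_singleton_iff, sub_eq_zero]
      exact hSmem p
    rw [h1]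
    exact isClosed_singleton.preimage (hsndcont.sub (hf_cont.comp hfstcont))
  have hSm : MeasurableSet S := hSclosed.measurableSet
  haveI : IsLocallyFiniteMeasure μ :=
    ⟨fun z => ⟨closedBall z 1, closedBall_mem_nhds z one_pos, hμ_fin z 1⟩⟩
  by_contra hne
  -- find a density point in S
  have hae := Besicovitch.ae_tendsto_measure_inter_div μ S
  obtain ⟨z, hzS, hzT⟩ : ∃ z ∈ S, Tendsto
      (fun r => μ (S ∩ closedBall z r) / μ (closedBall z r)) (𝓝[>] 0) (𝓝 1) := by
    by_contra hcon
    push_neg at hcon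
    have h0 : μ.restrict S {z | ¬ Tendsto
        (fun r => μ (S ∩ closedBall z r) / μ (closedBall z r)) (𝓝[>] 0) (𝓝 1)} = 0 :=
      ae_iff.1 hae
    have hsub : S ⊆ {z | ¬ Tendsto
        (fun r => μ (S ∩ closedBall z r) / μ (closedBall z r)) (𝓝[>] 0) (𝓝 1)} :=
      fun z hz' => hcon z hz'
    have h2 : μ.restrict S S = μ S := Measure.restrict_apply_self μ S
    have h3 : μ.restrict S S ≤ 0 := h0 ▸ measure_mono hsub
    exact hne (le_antisymm (h2 ▸ h3) (by simp))
  -- doubling iteration constant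
  obtain ⟨m, hm⟩ : ∃ m : ℕ, 2 / ε < 2 ^ m := pow_unbounded_of_one_lt _ one_lt_two
  set K : ℝ≥0∞ := (ENNReal.ofReal CD) ^ m with hKdef
  have hK0 : K ≠ 0 := by
    apply pow_ne_zero
    simp [ENNReal.ofReal_pos.2 hCD0]
    exact hCD0
  have hKtop : K ≠ ⊤ := by
    apply ENNReal.pow_ne_top
    exact ENNReal.ofReal_ne_top
  have hiter : ∀ (w : WithLp 2 (EuclideanSpace ℝ (Fin d) × ℝ)) (s : ℝ) (k : ℕ),
      μ (closedBall w (2 ^ k * s)) ≤ (ENNReal.ofReal CD) ^ k * μ (closedBall w s) := by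
    intro w s k
    induction k with
    | zero => simp
    | succ k ih =>
      have h1 : (2:ℝ) ^ (k+1) * s = (2 ^ (k+1) * s) := rfl
      calc μ (closedBall w (2 ^ (k+1) * s))
          ≤ ENNReal.ofReal CD * μ (closedBall w ((2 ^ (k+1) * s) / 2)) := hdoub w _
        _ = ENNReal.ofReal CD * μ (closedBall w (2 ^ k * s)) := by
            congr 2
            ring
        _ ≤ ENNReal.ofReal CD * ((ENNReal.ofReal CD) ^ k * μ (closedBall w s)) :=
            mul_le_mul_right ih _
        _ = (ENNReal.ofReal CD) ^ (k+1) * μ (closedBall w s) := by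
            rw [pow_succ']
            rw [mul_assoc]
  -- the density bound at every scale
  have hbound : ∀ R : ℝ, 0 < R →
      μ (S ∩ closedBall z R) / μ (closedBall z R) ≤ 1 - K⁻¹ := by
    intro R hR
    obtain ⟨x₀, hx₀⟩ := hzS
    obtain ⟨w, hw1, hw2⟩ := hporo x₀ R hR
    rw [← hx₀] at hw1
    have hεR : 0 < ε * R := by positivity
    have hwz : w ∈ closedBall z R := hw1 (mem_closedBall_self hεR.le)
    have hchain : closedBall z R ⊆ closedBall w (2 ^ m * (ε * R)) := by
      intro p hp
      rw [mem_closedBall] at hp ⊢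
      have h1 : dist p w ≤ dist p z + dist z w := dist_triangle _ _ _
      have h2 : dist z w ≤ R := by rw [dist_comm]; exact mem_closedBall.1 hwz
      have h3 : 2 * R ≤ 2 ^ m * (ε * R) := by
        rw [div_lt_iff₀ hε0] at hm
        nlinarith
      linarith
    have hKH : μ (closedBall z R) ≤ K * μ (closedBall w (ε * R)) :=
      (measure_mono hchain).trans (hiter w (ε * R) m)
    have hKinv : K⁻¹ * μ (closedBall z R) ≤ μ (closedBall w (ε * R)) := by
      calc K⁻¹ * μ (closedBall z R) ≤ K⁻¹ * (K * μ (closedBall w (ε * R))) :=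
            mul_le_mul_right hKH _
        _ = μ (closedBall w (ε * R)) := by
            rw [← mul_assoc, ENNReal.inv_mul_cancel hK0 hKtop, one_mul]
    have hdisj : Disjoint (S ∩ closedBall z R) (closedBall w (ε * R)) := by
      rw [Set.disjoint_left]
      rintro p ⟨hpS, _⟩ hphole
      exact hw2 p hphole ((hSmem p).1 hpS)
    have hunion : (S ∩ closedBall z R) ∪ closedBall w (ε * R) ⊆ closedBall z R :=
      Set.union_subset Set.inter_subset_right hw1
    have hadd : μ (S ∩ closedBall z R) + μ (closedBall w (ε * R)) ≤ μ (closedBall z R) := by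
      rw [← measure_union hdisj measurableSet_closedBall]
      exact measure_mono hunion
    have hsub : μ (S ∩ closedBall z R) ≤ μ (closedBall z R) - K⁻¹ * μ (closedBall z R) := by
      have hfin : K⁻¹ * μ (closedBall z R) ≠ ⊤ :=
        ENNReal.mul_ne_top (ENNReal.inv_ne_top.2 hK0) (hμ_fin z R).ne
      apply ENNReal.le_sub_of_add_le_right hfin
      calc μ (S ∩ closedBall z R) + K⁻¹ * μ (closedBall z R)
          ≤ μ (S ∩ closedBall z R) + μ (closedBall w (ε * R)) := add_le_add le_rfl hKinv
        _ ≤ μ (closedBall z R) := hadd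
    have hmul : (1 - K⁻¹) * μ (closedBall z R)
        = μ (closedBall z R) - K⁻¹ * μ (closedBall z R) := by
      rw [ENNReal.sub_mul (fun _ _ => (hμ_fin z R).ne), one_mul]
    exact ENNReal.div_le_of_le_mul (by rw [hmul]; exact hsub)
  -- contradiction with density 1
  have hlt : (1 : ℝ≥0∞) - K⁻¹ < 1 :=
    ENNReal.sub_lt_self ENNReal.one_ne_top one_ne_zero (ENNReal.inv_ne_zero.2 hKtop)
  have hev := hzT.eventually_const_lt hlt
  obtain ⟨r, hr1, hr2⟩ := (hev.and (eventually_mem_nhdsWithin)).exists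
  exact absurd (hbound r hr2) (not_le.2 hr1)
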